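/- arXiv:1103.1799 — 2 statements merged into one kernel-verified Lean document; each statement's English description precedes it below -/
import Mathlib

section
/- With v = (g'/f')^α and u = f·v as above, the identity u''v − v''u = (1−2α)·f''·(g'/f')^{2α} + 2α·g''·(g'/f')^{2α−1} holds. -/
/-- With `v = (g'/f')^α = exp (α • L)` (a fixed holomorphic branch) and `u = f·v`,
we have `u''v − v''u = (1−2α)·f''·(g'/f')^{2α} + 2α·g''·(g'/f')^{2α−1}`. -/
theorem wronskian_second_identity
    (Ω : Set ℂ) (hΩ : IsOpen Ω) (hconn : IsPreconnected Ω)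
    (f g L : ℂ → ℂ)
    (hf : DifferentiableOn ℂ f Ω) (hg : DifferentiableOn ℂ g Ω)
    (hf' : DifferentiableOn ℂ (deriv f) Ω) (hg' : DifferentiableOn ℂ (deriv g) Ω)
    (hf'' : DifferentiableOn ℂ (deriv (deriv f)) Ω)
    (hg'' : DifferentiableOn ℂ (deriv (deriv g)) Ω)
    (hfne : ∀ z ∈ Ω, deriv f z ≠ 0) (hgne : ∀ z ∈ Ω, deriv g z ≠ 0)
    (hL : DifferentiableOn ℂ L Ω)
    (hLlog : ∀ z ∈ Ω, Complex.exp (L z) = deriv g z / deriv f z)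
    (α : ℂ)
    (v u : ℂ → ℂ)
    (hv : ∀ z ∈ Ω, v z = Complex.exp (α * L z))
    (hu : ∀ z ∈ Ω, u z = f z * v z) :
    ∀ z ∈ Ω, deriv (deriv u) z * v z - deriv (deriv v) z * u z
      = (1 - 2 * α) * deriv (deriv f) z * Complex.exp ((2 * α) * L z)
        + 2 * α * deriv (deriv g) z * Complex.exp ((2 * α - 1) * L z) := by
  -- pointwise differentiability
  have hfd : ∀ w ∈ Ω, DifferentiableAt ℂ f w := fun w hw => hf.differentiableAt (hΩ.mem_nhds hw)
  have hf'd : ∀ w ∈ Ω, DifferentiableAt ℂ (deriv f) w :=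
    fun w hw => hf'.differentiableAt (hΩ.mem_nhds hw)
  have hg'd : ∀ w ∈ Ω, DifferentiableAt ℂ (deriv g) w :=
    fun w hw => hg'.differentiableAt (hΩ.mem_nhds hw)
  have hf''d : ∀ w ∈ Ω, DifferentiableAt ℂ (deriv (deriv f)) w :=
    fun w hw => hf''.differentiableAt (hΩ.mem_nhds hw)
  have hg''d : ∀ w ∈ Ω, DifferentiableAt ℂ (deriv (deriv g)) w :=
    fun w hw => hg''.differentiableAt (hΩ.mem_nhds hw)
  have hLd : ∀ w ∈ Ω, DifferentiableAt ℂ L w := fun w hw => hL.differentiableAt (hΩ.mem_nhds hw)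
  -- v is differentiable with derivative α L' v
  have hvd : ∀ w ∈ Ω, DifferentiableAt ℂ v w := by
    intro w hw
    have hE : v =ᶠ[nhds w] fun x => Complex.exp (α * L x) :=
      Filter.eventuallyEq_of_mem (hΩ.mem_nhds hw) hv
    exact (Filter.EventuallyEq.differentiableAt_iff hE).2 (((hLd w hw).const_mul α).cexp)
  have hv' : ∀ w ∈ Ω, deriv v w = α * deriv L w * v w := by
    intro w hw
    have hE : v =ᶠ[nhds w] fun x => Complex.exp (α * L x) :=
      Filter.eventuallyEq_of_mem (hΩ.mem_nhds hw) hv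
    rw [hE.deriv_eq, deriv_cexp ((hLd w hw).const_mul α),
      deriv_const_mul _ (hLd w hw), ← hv w hw]
    ring
  -- formula for L'
  have hL' : ∀ w ∈ Ω, deriv L w =
      (deriv (deriv g) w * deriv f w - deriv g w * deriv (deriv f) w) /
        (deriv f w * deriv g w) := by
    intro w hw
    have hE : (fun x => Complex.exp (L x)) =ᶠ[nhds w] fun x => deriv g x / deriv f x :=
      Filter.eventuallyEq_of_mem (hΩ.mem_nhds hw) hLlog
    have h1 := hE.deriv_eq
    rw [deriv_cexp (hLd w hw), deriv_fun_div (hg'd w hw) (hf'd w hw) (hfne w hw),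
      hLlog w hw] at h1
    have hf0 := hfne w hw
    have hg0 := hgne w hw
    field_simp at h1
    rw [eq_div_iff (mul_ne_zero hf0 hg0)]
    apply mul_right_cancel₀ hf0
    linear_combination (deriv f w) * h1
  -- deriv L is differentiable
  have hL'd : ∀ w ∈ Ω, DifferentiableAt ℂ (deriv L) w := by
    intro w hw
    have hE : deriv L =ᶠ[nhds w] fun x =>
        (deriv (deriv g) x * deriv f x - deriv g x * deriv (deriv f) x) /
          (deriv f x * deriv g x) :=
      Filter.eventuallyEq_of_mem (hΩ.mem_nhds hw) hL'
    refine (Filter.EventuallyEq.differentiableAt_iff hE).2 ?_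
    exact (((hg''d w hw).mul (hf'd w hw)).sub ((hg'd w hw).mul (hf''d w hw))).div
      ((hf'd w hw).mul (hg'd w hw)) (mul_ne_zero (hfne w hw) (hgne w hw))
  -- deriv v is differentiable
  have hv'd : ∀ w ∈ Ω, DifferentiableAt ℂ (deriv v) w := by
    intro w hw
    have hE : deriv v =ᶠ[nhds w] fun x => α * deriv L x * v x :=
      Filter.eventuallyEq_of_mem (hΩ.mem_nhds hw) hv'
    exact (Filter.EventuallyEq.differentiableAt_iff hE).2
      (((hL'd w hw).const_mul α).mul (hvd w hw))
  -- first derivative of u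
  have hu' : ∀ w ∈ Ω, deriv u w = deriv f w * v w + f w * deriv v w := by
    intro w hw
    have hE : u =ᶠ[nhds w] fun x => f x * v x :=
      Filter.eventuallyEq_of_mem (hΩ.mem_nhds hw) hu
    rw [hE.deriv_eq, deriv_fun_mul (hfd w hw) (hvd w hw)]
  intro z hz
  have hf0 := hfne z hz
  have hg0 := hgne z hz
  -- second derivative of u
  have hu'' : deriv (deriv u) z = deriv (deriv f) z * v z + 2 * deriv f z * deriv v z
      + f z * deriv (deriv v) z := by
    have hE : deriv u =ᶠ[nhds z] fun x => deriv f x * v x + f x * deriv v x :=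
      Filter.eventuallyEq_of_mem (hΩ.mem_nhds hz) hu'
    rw [hE.deriv_eq, deriv_fun_add ((hf'd z hz).fun_mul (hvd z hz)) ((hfd z hz).fun_mul (hv'd z hz)),
      deriv_fun_mul (hf'd z hz) (hvd z hz), deriv_fun_mul (hfd z hz) (hv'd z hz)]
    ring
  -- exponential identities
  have hexpL : Complex.exp (L z) = deriv g z / deriv f z := hLlog z hz
  have hE2 : Complex.exp ((2 * α) * L z)
      = Complex.exp (α * L z) * Complex.exp (α * L z) := by
    rw [← Complex.exp_add]; ring_nf
  have hE1 : Complex.exp ((2 * α - 1) * L z)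
      = Complex.exp (α * L z) * Complex.exp (α * L z) * (deriv f z / deriv g z) := by
    rw [show (2 * α - 1) * L z = α * L z + α * L z - L z by ring, Complex.exp_sub,
      Complex.exp_add, hexpL]
    field_simp
  rw [hu'', hu z hz, hv' z hz, hL' z hz, hE2, hE1, hv z hz]
  field_simp
  ring
end

section
/- With v = (g'/f')^α and u = f·v as above, the Wronskian-type identity u''v' − v''u' = α·f'·(g'/f')^{2α}·[ (S_f − S_g) + (α − 1/2)·(f''/f' − g''/g')^2 ] holds, where S_f = (f''/f')' − (1/2)(f''/f')^2 is the Schwarzian derivative. -/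
open Filter Topology

set_option maxHeartbeats 1000000 in
/-- With `v = (g'/f')^α = exp (α • L)` and `u = f·v`, the Wronskian-type identity
`u''v' − v''u' = α·f'·(g'/f')^{2α}·[(S_f − S_g) + (α − 1/2)·(f''/f' − g''/g')²]` holds,
where `S_f = (f''/f')' − (1/2)(f''/f')²` is the Schwarzian derivative. -/
theorem wronskian_third_identity
    (Ω : Set ℂ) (hΩ : IsOpen Ω) (hconn : IsPreconnected Ω)
    (f g L : ℂ → ℂ)
    (hf : DifferentiableOn ℂ f Ω) (hg : DifferentiableOn ℂ g Ω)
    (hf' : DifferentiableOn ℂ (deriv f) Ω) (hg' : DifferentiableOn ℂ (deriv g) Ω)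
    (hf'' : DifferentiableOn ℂ (deriv (deriv f)) Ω)
    (hg'' : DifferentiableOn ℂ (deriv (deriv g)) Ω)
    (hfne : ∀ z ∈ Ω, deriv f z ≠ 0) (hgne : ∀ z ∈ Ω, deriv g z ≠ 0)
    (hL : DifferentiableOn ℂ L Ω)
    (hLlog : ∀ z ∈ Ω, Complex.exp (L z) = deriv g z / deriv f z)
    (α : ℂ)
    (v u Sf Sg : ℂ → ℂ)
    (hv : ∀ z ∈ Ω, v z = Complex.exp (α * L z))
    (hu : ∀ z ∈ Ω, u z = f z * v z)
    (hSf : ∀ z ∈ Ω, Sf z = deriv (fun w => deriv (deriv f) w / deriv f w) z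
        - (1 / 2) * (deriv (deriv f) z / deriv f z) ^ 2)
    (hSg : ∀ z ∈ Ω, Sg z = deriv (fun w => deriv (deriv g) w / deriv g w) z
        - (1 / 2) * (deriv (deriv g) z / deriv g z) ^ 2) :
    ∀ z ∈ Ω, deriv (deriv u) z * deriv v z - deriv (deriv v) z * deriv u z
      = α * deriv f z * Complex.exp ((2 * α) * L z)
        * ((Sf z - Sg z)
          + (α - 1 / 2) * (deriv (deriv f) z / deriv f z
              - deriv (deriv g) z / deriv g z) ^ 2) := by
  -- Step A: L' = g''/g' - f''/f' on Ω
  have hLM : ∀ w ∈ Ω, deriv L w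
      = deriv (deriv g) w / deriv g w - deriv (deriv f) w / deriv f w := by
    intro w hw
    have hmem : Ω ∈ 𝓝 w := hΩ.mem_nhds hw
    have h1 : HasDerivAt (fun t => Complex.exp (L t))
        (Complex.exp (L w) * deriv L w) w :=
      ((hL.differentiableAt hmem).hasDerivAt).cexp
    have h2 : HasDerivAt (fun t => deriv g t / deriv f t)
        ((deriv (deriv g) w * deriv f w - deriv g w * deriv (deriv f) w)
          / (deriv f w) ^ 2) w :=
      ((hg'.differentiableAt hmem).hasDerivAt).div
        ((hf'.differentiableAt hmem).hasDerivAt) (hfne w hw)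
    have heq : deriv (fun t => Complex.exp (L t)) w
        = deriv (fun t => deriv g t / deriv f t) w :=
      Filter.EventuallyEq.deriv_eq
        (Filter.eventuallyEq_of_mem hmem (fun t ht => hLlog t ht))
    rw [h1.deriv, h2.deriv, hLlog w hw] at heq
    have hf0 := hfne w hw
    have hg0 := hgne w hw
    field_simp at heq
    have heq2 : deriv g w * deriv L w * deriv f w
        = deriv (deriv g) w * deriv f w - deriv g w * deriv (deriv f) w :=
      mul_right_cancel₀ hf0 (by linear_combination (deriv f w) * heq)
    field_simp
    linear_combination heq2
  -- differentiability of the logarithmic-derivative quotients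
  have hPd : DifferentiableOn ℂ (fun w => deriv (deriv f) w / deriv f w) Ω :=
    hf''.div hf' hfne
  have hQd : DifferentiableOn ℂ (fun w => deriv (deriv g) w / deriv g w) Ω :=
    hg''.div hg' hgne
  -- Step C: formula for v' on Ω
  have hvd : ∀ w ∈ Ω, deriv v w
      = α * (deriv (deriv g) w / deriv g w - deriv (deriv f) w / deriv f w)
        * Complex.exp (α * L w) := by
    intro w hw
    have hmem : Ω ∈ 𝓝 w := hΩ.mem_nhds hw
    have h0 : deriv v w = deriv (fun t => Complex.exp (α * L t)) w :=
      Filter.EventuallyEq.deriv_eq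
        (Filter.eventuallyEq_of_mem hmem (fun t ht => hv t ht))
    have hD : HasDerivAt (fun t => Complex.exp (α * L t))
        (Complex.exp (α * L w) * (α * deriv L w)) w :=
      (((hL.differentiableAt hmem).hasDerivAt).const_mul α).cexp
    rw [h0, hD.deriv, hLM w hw]; ring
  -- Step D: formula for u' on Ω
  have hud : ∀ w ∈ Ω, deriv u w
      = (deriv f w + α * (f w
          * (deriv (deriv g) w / deriv g w - deriv (deriv f) w / deriv f w)))
        * Complex.exp (α * L w) := by
    intro w hw
    have hmem : Ω ∈ 𝓝 w := hΩ.mem_nhds hw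
    have h0 : deriv u w = deriv (fun t => f t * Complex.exp (α * L t)) w := by
      apply Filter.EventuallyEq.deriv_eq
      filter_upwards [hmem] with t ht
      rw [hu t ht, hv t ht]
    have hE : HasDerivAt (fun t => Complex.exp (α * L t))
        (Complex.exp (α * L w) * (α * deriv L w)) w :=
      (((hL.differentiableAt hmem).hasDerivAt).const_mul α).cexp
    have hF : HasDerivAt f (deriv f w) w := (hf.differentiableAt hmem).hasDerivAt
    rw [h0, HasDerivAt.deriv (f := fun t => f t * Complex.exp (α * L t)) (hF.mul hE), hLM w hw]; ring
  -- now work at the point z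
  intro z hz
  have hmem : Ω ∈ 𝓝 z := hΩ.mem_nhds hz
  have hPz : DifferentiableAt ℂ (fun w => deriv (deriv f) w / deriv f w) z :=
    hPd.differentiableAt hmem
  have hQz : DifferentiableAt ℂ (fun w => deriv (deriv g) w / deriv g w) z :=
    hQd.differentiableAt hmem
  have hMd : HasDerivAt
      (fun w => deriv (deriv g) w / deriv g w - deriv (deriv f) w / deriv f w)
      (deriv (fun w => deriv (deriv g) w / deriv g w) z
        - deriv (fun w => deriv (deriv f) w / deriv f w) z) z :=
    hQz.hasDerivAt.sub hPz.hasDerivAt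
  have hE : HasDerivAt (fun t => Complex.exp (α * L t))
      (Complex.exp (α * L z) * (α * deriv L z)) z :=
    (((hL.differentiableAt hmem).hasDerivAt).const_mul α).cexp
  -- second derivative of v at z
  have hvv : deriv (deriv v) z
      = α * (deriv (fun w => deriv (deriv g) w / deriv g w) z
            - deriv (fun w => deriv (deriv f) w / deriv f w) z)
          * Complex.exp (α * L z)
        + α * (deriv (deriv g) z / deriv g z - deriv (deriv f) z / deriv f z)
          * (Complex.exp (α * L z) * (α * deriv L z)) := by
    have h0 : deriv (deriv v) z
        = deriv (fun w => α
            * (deriv (deriv g) w / deriv g w - deriv (deriv f) w / deriv f w)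
            * Complex.exp (α * L w)) z := by
      apply Filter.EventuallyEq.deriv_eq
      filter_upwards [hmem] with t ht
      exact hvd t ht
    rw [h0, HasDerivAt.deriv (f := fun w => α
        * (deriv (deriv g) w / deriv g w - deriv (deriv f) w / deriv f w)
        * Complex.exp (α * L w)) ((hMd.const_mul α).mul hE)]
  -- second derivative of u at z
  have huu : deriv (deriv u) z
      = (deriv (deriv f) z
          + (α * (deriv f z
              * (deriv (deriv g) z / deriv g z - deriv (deriv f) z / deriv f z)
            + f z * (deriv (fun w => deriv (deriv g) w / deriv g w) z
              - deriv (fun w => deriv (deriv f) w / deriv f w) z))))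
          * Complex.exp (α * L z)
        + (deriv f z + α * (f z
            * (deriv (deriv g) z / deriv g z - deriv (deriv f) z / deriv f z)))
          * (Complex.exp (α * L z) * (α * deriv L z)) := by
    have h0 : deriv (deriv u) z
        = deriv (fun w => (deriv f w + α * (f w
            * (deriv (deriv g) w / deriv g w - deriv (deriv f) w / deriv f w)))
            * Complex.exp (α * L w)) z := by
      apply Filter.EventuallyEq.deriv_eq
      filter_upwards [hmem] with t ht
      exact hud t ht
    have hF : HasDerivAt f (deriv f z) z := (hf.differentiableAt hmem).hasDerivAt
    have hF' : HasDerivAt (deriv f) (deriv (deriv f) z) z :=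
      (hf'.differentiableAt hmem).hasDerivAt
    have hin : HasDerivAt (fun w => deriv f w + α * (f w
        * (deriv (deriv g) w / deriv g w - deriv (deriv f) w / deriv f w)))
        (deriv (deriv f) z
          + (α * (deriv f z
              * (deriv (deriv g) z / deriv g z - deriv (deriv f) z / deriv f z)
            + f z * (deriv (fun w => deriv (deriv g) w / deriv g w) z
              - deriv (fun w => deriv (deriv f) w / deriv f w) z)))) z :=
      hF'.add ((hF.mul hMd).const_mul α)
    rw [h0, HasDerivAt.deriv (f := fun w => (deriv f w + α * (f w
        * (deriv (deriv g) w / deriv g w - deriv (deriv f) w / deriv f w)))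
        * Complex.exp (α * L w)) (hin.mul hE)]
  -- assemble
  have hexp2 : Complex.exp ((2 * α) * L z)
      = Complex.exp (α * L z) * Complex.exp (α * L z) := by
    rw [← Complex.exp_add]; ring_nf
  rw [huu, hvv, hvd z hz, hud z hz, hSf z hz, hSg z hz, hLM z hz, hexp2]
  have hf0 := hfne z hz
  have hg0 := hgne z hz
  obtain ⟨p, hp⟩ : ∃ p, deriv (deriv f) z = p * deriv f z :=
    ⟨deriv (deriv f) z / deriv f z, (div_mul_cancel₀ _ hf0).symm⟩
  obtain ⟨q, hq⟩ : ∃ q, deriv (deriv g) z = q * deriv g z :=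
    ⟨deriv (deriv g) z / deriv g z, (div_mul_cancel₀ _ hg0).symm⟩
  rw [hp, hq, mul_div_cancel_right₀ _ hf0, mul_div_cancel_right₀ _ hg0]
  ring
end
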